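/- The average-work function M(τ) satisfies lim_{τ → ∞} M(τ) = T ln(Z_T(δ_min)/Z_T(δ_max)), the work output of the corresponding isothermal reversible process. -/

import Mathlib

set_option maxHeartbeats 1000000

open Set Filter

/-- `G_τ(u) = -∑_{n=1}^∞ (-exp(-u/T))^n / (nε/(κτT) + 1)`. -/
noncomputable def Gser (T ε κ τ u : ℝ) : ℝ :=
  -∑' n : ℕ, (-Real.exp (-u / T)) ^ (n + 1) / ((n + 1 : ℝ) * ε / (κ * τ * T) + 1)

/-- The average-work function
`M(τ) = T ln(Z(δmin)/Z(δmax)) + (ε p₀/(κτ))(1 − e^{−κτ}) − (ε/(κτ))(G_τ(δmin) − e^{−κτ} G_τ(δmax))`,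
with `Z(δ) = 1 + exp(−δ/T)` and `ε = δmax − δmin`. -/
noncomputable def Mavg (T δmin δmax κ p₀ τ : ℝ) : ℝ :=
  T * Real.log ((1 + Real.exp (-δmin / T)) / (1 + Real.exp (-δmax / T)))
    + (δmax - δmin) * p₀ / (κ * τ) * (1 - Real.exp (-κ * τ))
    - (δmax - δmin) / (κ * τ) *
        (Gser T (δmax - δmin) κ τ δmin - Real.exp (-κ * τ) * Gser T (δmax - δmin) κ τ δmax)


lemma Gser_abs_le (T ε κ τ u : ℝ) (hT : 0 < T) (hu : 0 < u) (hε : 0 ≤ ε) (hκ : 0 < κ)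
    (hτ : 0 < τ) : |Gser T ε κ τ u| ≤ (1 - Real.exp (-u / T))⁻¹ := by
  set r := Real.exp (-u / T) with hr
  have hr0 : 0 < r := Real.exp_pos _
  have hr1 : r < 1 := Real.exp_lt_one_iff.mpr (by rw [neg_div]; exact neg_lt_zero.mpr (by positivity))
  have hd : ∀ n : ℕ, (1 : ℝ) ≤ (n + 1 : ℝ) * ε / (κ * τ * T) + 1 := by
    intro n
    have : (0:ℝ) ≤ (n + 1 : ℝ) * ε / (κ * τ * T) := by positivity
    linarith
  have habs : ∀ n : ℕ, |(-r) ^ (n + 1) / ((n + 1 : ℝ) * ε / (κ * τ * T) + 1)| ≤ r ^ n := by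
    intro n
    have h1 : |(-r) ^ (n + 1) / ((n + 1 : ℝ) * ε / (κ * τ * T) + 1)|
        = r ^ (n + 1) / ((n + 1 : ℝ) * ε / (κ * τ * T) + 1) := by
      rw [abs_div, abs_pow, abs_neg, abs_of_pos hr0, abs_of_pos (lt_of_lt_of_le one_pos (hd n))]
    rw [h1]
    calc r ^ (n + 1) / ((n + 1 : ℝ) * ε / (κ * τ * T) + 1) ≤ r ^ (n + 1) / 1 :=
          div_le_div_of_nonneg_left (by positivity) one_pos (hd n)
      _ = r ^ n * r := by ring
      _ ≤ r ^ n * 1 := by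
          exact mul_le_mul_of_nonneg_left hr1.le (by positivity)
      _ = r ^ n := by ring
  have hgeo : Summable fun n : ℕ => r ^ n := summable_geometric_of_lt_one hr0.le hr1
  have hsum : Summable fun n : ℕ =>
      |(-r) ^ (n + 1) / ((n + 1 : ℝ) * ε / (κ * τ * T) + 1)| :=
    Summable.of_nonneg_of_le (fun n => abs_nonneg _) habs hgeo
  have h2 : |Gser T ε κ τ u| ≤ ∑' n : ℕ,
      |(-r) ^ (n + 1) / ((n + 1 : ℝ) * ε / (κ * τ * T) + 1)| := by
    rw [Gser, abs_neg]
    have h := norm_tsum_le_tsum_norm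
      (f := fun n : ℕ => (-r) ^ (n + 1) / ((n + 1 : ℝ) * ε / (κ * τ * T) + 1))
      (by simpa only [Real.norm_eq_abs] using hsum)
    simpa only [Real.norm_eq_abs] using h
  calc |Gser T ε κ τ u| ≤ _ := h2
    _ ≤ ∑' n : ℕ, r ^ n := Summable.tsum_le_tsum habs hsum hgeo
    _ = (1 - r)⁻¹ := tsum_geometric_of_lt_one hr0.le hr1

/-- the average work tends to the isothermal work
`T ln(Z(δmin)/Z(δmax))` as `τ → ∞`. -/
theorem stmt5 (T δmin δmax κ p₀ : ℝ)
    (hT : 0 < T) (hmin : 0 < δmin) (hlt : δmin < δmax) (hκ : 0 < κ)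
    (hp₀ : p₀ ∈ Icc (0 : ℝ) 1) :
    Tendsto (fun τ => Mavg T δmin δmax κ p₀ τ) atTop
      (nhds (T * Real.log ((1 + Real.exp (-δmin / T)) / (1 + Real.exp (-δmax / T))))) := by
  set C : ℝ := T * Real.log ((1 + Real.exp (-δmin / T)) / (1 + Real.exp (-δmax / T))) with hC
  have hmax : 0 < δmax := lt_trans hmin hlt
  set ε := δmax - δmin with hε
  have hε0 : 0 < ε := by simp [hε]; linarith
  set K : ℝ := ε / κ * (1 + (1 - Real.exp (-δmin / T))⁻¹ + (1 - Real.exp (-δmax / T))⁻¹) with hK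
  have hr1min : Real.exp (-δmin / T) < 1 := Real.exp_lt_one_iff.mpr (by rw [neg_div]; exact neg_lt_zero.mpr (by positivity))
  have hr1max : Real.exp (-δmax / T) < 1 := Real.exp_lt_one_iff.mpr (by rw [neg_div]; exact neg_lt_zero.mpr (by positivity))
  have hK0 : 0 ≤ K := by
    rw [hK]
    have h1 : 0 ≤ (1 - Real.exp (-δmin / T))⁻¹ := inv_nonneg.mpr (by linarith)
    have h2 : 0 ≤ (1 - Real.exp (-δmax / T))⁻¹ := inv_nonneg.mpr (by linarith)
    have : 0 ≤ ε / κ := by positivity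
    nlinarith [mul_nonneg this (by linarith : (0:ℝ) ≤ 1 + (1 - Real.exp (-δmin / T))⁻¹ + (1 - Real.exp (-δmax / T))⁻¹)]
  have key : Tendsto (fun τ => Mavg T δmin δmax κ p₀ τ - C) atTop (nhds 0) := by
    apply squeeze_zero_norm' (a := fun τ => K / τ)
    · filter_upwards [eventually_gt_atTop (0:ℝ)] with τ hτ
      have hκτ : 0 < κ * τ := by positivity
      have he1 : Real.exp (-κ * τ) ≤ 1 := Real.exp_le_one_iff.mpr (by nlinarith)
      have he0 : 0 < Real.exp (-κ * τ) := Real.exp_pos _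
      have hG1 := Gser_abs_le T ε κ τ δmin hT hmin hε0.le hκ hτ
      have hG2 := Gser_abs_le T ε κ τ δmax hT (by linarith) hε0.le hκ hτ
      have hform : Mavg T δmin δmax κ p₀ τ - C
          = ε * p₀ / (κ * τ) * (1 - Real.exp (-κ * τ))
            - ε / (κ * τ) * (Gser T ε κ τ δmin - Real.exp (-κ * τ) * Gser T ε κ τ δmax) := by
        simp [Mavg, hC, hε]; ring
      rw [hform]
      have hb1 : |ε * p₀ / (κ * τ) * (1 - Real.exp (-κ * τ))| ≤ ε / (κ * τ) * 1 := by
        rw [abs_mul, abs_div]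
        have h1 : |ε * p₀| ≤ ε := by
          rw [abs_of_nonneg (by nlinarith [hp₀.1])]
          nlinarith [hp₀.1, hp₀.2]
        have h2 : |1 - Real.exp (-κ * τ)| ≤ 1 := by
          rw [abs_of_nonneg (by linarith)]; linarith
        have h3 : |κ * τ| = κ * τ := abs_of_pos hκτ
        rw [h3]
        apply mul_le_mul _ h2 (abs_nonneg _) (by positivity)
        exact div_le_div_of_nonneg_right h1 hκτ.le
      have hb2 : |ε / (κ * τ) * (Gser T ε κ τ δmin - Real.exp (-κ * τ) * Gser T ε κ τ δmax)|
          ≤ ε / (κ * τ) * ((1 - Real.exp (-δmin / T))⁻¹ + (1 - Real.exp (-δmax / T))⁻¹) := by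
        rw [abs_mul, abs_of_pos (by positivity : (0:ℝ) < ε / (κ * τ))]
        apply mul_le_mul_of_nonneg_left _ (by positivity)
        calc |Gser T ε κ τ δmin - Real.exp (-κ * τ) * Gser T ε κ τ δmax|
            ≤ |Gser T ε κ τ δmin| + |Real.exp (-κ * τ) * Gser T ε κ τ δmax| := abs_sub _ _
          _ ≤ (1 - Real.exp (-δmin / T))⁻¹ + (1 - Real.exp (-δmax / T))⁻¹ := by
              rw [abs_mul, abs_of_pos he0]
              have : Real.exp (-κ * τ) * |Gser T ε κ τ δmax| ≤ |Gser T ε κ τ δmax| := by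
                nlinarith [abs_nonneg (Gser T ε κ τ δmax)]
              have := le_trans this hG2
              linarith
      calc ‖ε * p₀ / (κ * τ) * (1 - Real.exp (-κ * τ))
            - ε / (κ * τ) * (Gser T ε κ τ δmin - Real.exp (-κ * τ) * Gser T ε κ τ δmax)‖
          ≤ |ε * p₀ / (κ * τ) * (1 - Real.exp (-κ * τ))|
            + |ε / (κ * τ) * (Gser T ε κ τ δmin - Real.exp (-κ * τ) * Gser T ε κ τ δmax)| :=
            abs_sub _ _
        _ ≤ ε / (κ * τ) * 1
            + ε / (κ * τ) * ((1 - Real.exp (-δmin / T))⁻¹ + (1 - Real.exp (-δmax / T))⁻¹) :=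
            add_le_add hb1 hb2
        _ = K / τ := by rw [hK]; field_simp; ring
    · exact Tendsto.div_atTop tendsto_const_nhds tendsto_id
  have h2 : Tendsto (fun τ : ℝ => C + (Mavg T δmin δmax κ p₀ τ - C)) atTop (nhds (C + 0)) :=
    tendsto_const_nhds.add key
  have h3 : (fun τ => C + (Mavg T δmin δmax κ p₀ τ - C)) = fun τ => Mavg T δmin δmax κ p₀ τ := by
    funext τ; ring
  rw [h3, add_zero] at h2
  exact h2
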